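/- Let β=(β_n)_{n∈ℕ} be a Cantor base with x_β<+∞. The restriction of θ_β to D_β is a bijection from D_β onto D'_β, and the restriction of θ_β to S_β is a bijection from S_β onto S'_β. -/

import Mathlib

open Filter Topology

/-- A Cantor real base: a sequence of reals `> 1` whose infinite product diverges to `+∞`. -/
structure IsCantorBase (β : ℕ → ℝ) : Prop where
  one_lt : ∀ n, 1 < β n
  prod_tendsto : Tendsto (fun N => ∏ i ∈ Finset.range N, β i) atTop atTop

/-- The product `β_0 ⋯ β_n`. -/
noncomputable def prodUpTo (β : ℕ → ℝ) (n : ℕ) : ℝ := ∏ i ∈ Finset.range (n + 1), β i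

/-- The shifted base `β^(n) = (β_n, β_{n+1}, …)`. -/
def shiftBase (β : ℕ → ℝ) (n : ℕ) : ℕ → ℝ := fun m => β (n + m)

/-- `x_β = Σ_{n} (⌈β_n⌉ - 1)/(β_0 ⋯ β_n)`. -/
noncomputable def xB (β : ℕ → ℝ) : ℝ := ∑' n, ((⌈β n⌉ : ℝ) - 1) / prodUpTo β n

/-- The condition `x_β < +∞`, i.e. the series defining `x_β` converges. -/
def XBSummable (β : ℕ → ℝ) : Prop :=
  Summable (fun n => ((⌈β n⌉ : ℝ) - 1) / prodUpTo β n)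

/-- `val_β(a) = Σ_n a_n/(β_0 ⋯ β_n)`. -/
noncomputable def valB (β : ℕ → ℝ) (a : ℕ → ℤ) : ℝ := ∑' n, (a n : ℝ) / prodUpTo β n

/-- The digit condition `a_n ∈ [[0, ⌈β_n⌉ - 1]]` for all `n`. -/
def validWord (β : ℕ → ℝ) (a : ℕ → ℤ) : Prop := ∀ n, 0 ≤ a n ∧ a n ≤ ⌈β n⌉ - 1

/-- The flip map `θ_β`. -/
noncomputable def theta (β : ℕ → ℝ) (a : ℕ → ℤ) : ℕ → ℤ := fun n => ⌈β n⌉ - 1 - a n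

/-- The greedy remainders `r_{β,n}(x)`. -/
noncomputable def greedyR (β : ℕ → ℝ) (x : ℝ) : ℕ → ℝ
  | 0 => β 0 * x - (⌊β 0 * x⌋ : ℝ)
  | n + 1 => β (n + 1) * greedyR β x n - (⌊β (n + 1) * greedyR β x n⌋ : ℝ)

/-- The greedy digits `ε_{β,n}(x)`; `greedyDigit β x` is the greedy β-expansion `d_β(x)`. -/
noncomputable def greedyDigit (β : ℕ → ℝ) (x : ℝ) : ℕ → ℤ
  | 0 => ⌊β 0 * x⌋
  | n + 1 => ⌊β (n + 1) * greedyR β x n⌋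

/-- The lazy remainders `s_{β,n}(x)`. -/
noncomputable def lazyS (β : ℕ → ℝ) (x : ℝ) : ℕ → ℝ
  | 0 => β 0 * x - (⌈β 0 * x - xB (shiftBase β 1)⌉ : ℝ)
  | n + 1 => β (n + 1) * lazyS β x n -
      (⌈β (n + 1) * lazyS β x n - xB (shiftBase β (n + 2))⌉ : ℝ)

/-- The lazy digits `ξ_{β,n}(x)`; `lazyDigit β x` is the lazy β-expansion `ℓ_β(x)`. -/
noncomputable def lazyDigit (β : ℕ → ℝ) (x : ℝ) : ℕ → ℤ
  | 0 => ⌈β 0 * x - xB (shiftBase β 1)⌉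
  | n + 1 => ⌈β (n + 1) * lazyS β x n - xB (shiftBase β (n + 2))⌉

/-- Strict lexicographic order on infinite words. -/
def lexLt (a b : ℕ → ℤ) : Prop := ∃ k, (∀ i < k, a i = b i) ∧ a k < b k

/-- Lexicographic order on infinite words. -/
def lexLe (a b : ℕ → ℤ) : Prop := lexLt a b ∨ a = b

/-- `D_β`, the set of greedy β-expansions of points of `[0,1)`. -/
def greedySet (β : ℕ → ℝ) : Set (ℕ → ℤ) :=
  {a | ∃ x ∈ Set.Ico (0 : ℝ) 1, a = greedyDigit β x}

/-- `D'_β`, the set of lazy β-expansions of points of `(x_β - 1, x_β]`. -/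
def lazySet (β : ℕ → ℝ) : Set (ℕ → ℤ) :=
  {a | ∃ x ∈ Set.Ioc (xB β - 1) (xB β), a = lazyDigit β x}

/-- `Δ'_β = ⋃_n D'_{β^(n)}`. -/
def deltaSet (β : ℕ → ℝ) : Set (ℕ → ℤ) := ⋃ n, lazySet (shiftBase β n)


/- ### Auxiliary lemmas -/

lemma shiftBase_zero (β : ℕ → ℝ) : shiftBase β 0 = β := by
  funext m; simp [shiftBase]

lemma shiftBase_add (β : ℕ → ℝ) (n m : ℕ) :
    shiftBase (shiftBase β n) m = shiftBase β (n + m) := by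
  funext k; simp [shiftBase, add_assoc]

lemma prodUpTo_pos (β : ℕ → ℝ) (hβ : ∀ n, 1 < β n) (n : ℕ) : 0 < prodUpTo β n :=
  Finset.prod_pos fun i _ => lt_trans one_pos (hβ i)

lemma prodUpTo_shift (β : ℕ → ℝ) (n : ℕ) :
    prodUpTo β (n + 1) = prodUpTo (shiftBase β 1) n * β 0 := by
  unfold prodUpTo
  rw [Finset.prod_range_succ']
  congr 1
  exact Finset.prod_congr rfl fun i _ => by simp [shiftBase, add_comm]

lemma term_shift (β : ℕ → ℝ) (hβ : ∀ n, 1 < β n) (n : ℕ) :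
    ((⌈shiftBase β 1 n⌉ : ℝ) - 1) / prodUpTo (shiftBase β 1) n
      = β 0 * (((⌈β (n + 1)⌉ : ℝ) - 1) / prodUpTo β (n + 1)) := by
  have h0 : β 0 ≠ 0 := ne_of_gt (lt_trans one_pos (hβ 0))
  have hP : prodUpTo (shiftBase β 1) n ≠ 0 :=
    ne_of_gt (prodUpTo_pos _ (fun m => hβ (1 + m)) n)
  have h1 : shiftBase β 1 n = β (n + 1) := by simp [shiftBase, add_comm]
  rw [h1, prodUpTo_shift]
  field_simp

lemma XBSummable.shift_one {β : ℕ → ℝ} (hβ : ∀ n, 1 < β n) (hx : XBSummable β) :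
    XBSummable (shiftBase β 1) := by
  have h1 : Summable (fun n => ((⌈β (n + 1)⌉ : ℝ) - 1) / prodUpTo β (n + 1)) :=
    (summable_nat_add_iff (f := fun n => ((⌈β n⌉ : ℝ) - 1) / prodUpTo β n) 1).2 hx
  have h2 := h1.mul_left (β 0)
  exact h2.congr fun n => (term_shift β hβ n).symm

lemma XBSummable.shift {β : ℕ → ℝ} (hβ : ∀ n, 1 < β n) (hx : XBSummable β) (n : ℕ) :
    XBSummable (shiftBase β n) := by
  induction n with
  | zero => rwa [shiftBase_zero]
  | succ k ih =>
      have := XBSummable.shift_one (β := shiftBase β k) (fun m => hβ (k + m)) ih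
      rwa [shiftBase_add] at this

lemma xB_rec (β : ℕ → ℝ) (hβ : ∀ n, 1 < β n) (hx : XBSummable β) :
    β 0 * xB β = ((⌈β 0⌉ : ℝ) - 1) + xB (shiftBase β 1) := by
  have h0 : β 0 ≠ 0 := ne_of_gt (lt_trans one_pos (hβ 0))
  have hsplit := Summable.tsum_eq_zero_add (f := fun n => ((⌈β n⌉ : ℝ) - 1) / prodUpTo β n) hx
  rw [xB, hsplit, mul_add, ← tsum_mul_left]
  have hterm : ∀ n : ℕ, β 0 * (((⌈β (n + 1)⌉ : ℝ) - 1) / prodUpTo β (n + 1))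
      = ((⌈shiftBase β 1 n⌉ : ℝ) - 1) / prodUpTo (shiftBase β 1) n :=
    fun n => (term_shift β hβ n).symm
  rw [tsum_congr hterm]
  have hp0 : prodUpTo β 0 = β 0 := by simp [prodUpTo]
  show β 0 * ((((⌈β 0⌉ : ℝ)) - 1) / prodUpTo β 0) + _ = _
  rw [hp0, xB]
  field_simp

lemma xB_rec' (β : ℕ → ℝ) (hβ : ∀ n, 1 < β n) (hx : XBSummable β) (n : ℕ) :
    β n * xB (shiftBase β n) = ((⌈β n⌉ : ℝ) - 1) + xB (shiftBase β (n + 1)) := by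
  have := xB_rec (shiftBase β n) (fun m => hβ (n + m)) (XBSummable.shift hβ hx n)
  rwa [shiftBase_add] at this

lemma ceil_intCast_sub (c : ℤ) (t : ℝ) : ⌈(c : ℝ) - t⌉ = c - ⌊t⌋ := by
  rw [sub_eq_add_neg, add_comm, Int.ceil_add_intCast, Int.ceil_neg]
  omega

lemma key_lemma (β : ℕ → ℝ) (hβ : ∀ n, 1 < β n) (hx : XBSummable β) (x : ℝ) :
    ∀ n, lazyDigit β (xB β - x) n = ⌈β n⌉ - 1 - greedyDigit β x n ∧
      lazyS β (xB β - x) n = xB (shiftBase β (n + 1)) - greedyR β x n := by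
  intro n
  induction n with
  | zero =>
      have h0 := xB_rec β hβ hx
      have harg : β 0 * (xB β - x) - xB (shiftBase β 1)
          = ((⌈β 0⌉ - 1 : ℤ) : ℝ) - β 0 * x := by
        push_cast
        rw [mul_sub, h0]; ring
      have hdig : lazyDigit β (xB β - x) 0 = ⌈β 0⌉ - 1 - greedyDigit β x 0 := by
        show ⌈β 0 * (xB β - x) - xB (shiftBase β 1)⌉ = ⌈β 0⌉ - 1 - ⌊β 0 * x⌋
        rw [harg, ceil_intCast_sub]
      refine ⟨hdig, ?_⟩
      show β 0 * (xB β - x) - ((⌈β 0 * (xB β - x) - xB (shiftBase β 1)⌉ : ℤ) : ℝ)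
          = xB (shiftBase β (0 + 1)) - (β 0 * x - (⌊β 0 * x⌋ : ℝ))
      have : (⌈β 0 * (xB β - x) - xB (shiftBase β 1)⌉ : ℤ) = ⌈β 0⌉ - 1 - ⌊β 0 * x⌋ := by
        rw [harg, ceil_intCast_sub]
      rw [this, mul_sub, h0]
      push_cast
      ring
  | succ k ih =>
      obtain ⟨_, hs⟩ := ih
      have hr := xB_rec' β hβ hx (k + 1)
      have harg : β (k + 1) * lazyS β (xB β - x) k - xB (shiftBase β (k + 2))
          = ((⌈β (k + 1)⌉ - 1 : ℤ) : ℝ) - β (k + 1) * greedyR β x k := by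
        rw [hs]
        push_cast
        rw [mul_sub, hr]; ring
      have hdig : lazyDigit β (xB β - x) (k + 1)
          = ⌈β (k + 1)⌉ - 1 - greedyDigit β x (k + 1) := by
        show ⌈β (k + 1) * lazyS β (xB β - x) k - xB (shiftBase β (k + 2))⌉
            = ⌈β (k + 1)⌉ - 1 - ⌊β (k + 1) * greedyR β x k⌋
        rw [harg, ceil_intCast_sub]
      refine ⟨hdig, ?_⟩
      show β (k + 1) * lazyS β (xB β - x) k -
          ((⌈β (k + 1) * lazyS β (xB β - x) k - xB (shiftBase β (k + 2))⌉ : ℤ) : ℝ)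
          = xB (shiftBase β (k + 1 + 1)) -
            (β (k + 1) * greedyR β x k - (⌊β (k + 1) * greedyR β x k⌋ : ℝ))
      have hc : (⌈β (k + 1) * lazyS β (xB β - x) k - xB (shiftBase β (k + 2))⌉ : ℤ)
          = ⌈β (k + 1)⌉ - 1 - ⌊β (k + 1) * greedyR β x k⌋ := by
        rw [harg, ceil_intCast_sub]
      rw [hc, hs, mul_sub, hr]
      push_cast
      ring

lemma theta_greedy (β : ℕ → ℝ) (hβ : ∀ n, 1 < β n) (hx : XBSummable β) (x : ℝ) :
    theta β (greedyDigit β x) = lazyDigit β (xB β - x) := by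
  funext n
  have := (key_lemma β hβ hx x n).1
  simp [theta, this]

lemma theta_theta (β : ℕ → ℝ) (a : ℕ → ℤ) : theta β (theta β a) = a := by
  funext n; simp [theta]

lemma theta_injective (β : ℕ → ℝ) : Function.Injective (theta β) :=
  Function.LeftInverse.injective (theta_theta β)

lemma theta_continuous (β : ℕ → ℝ) : Continuous (theta β) :=
  continuous_pi fun n => continuous_const.sub (continuous_apply n)

/-- `θ_β` as a homeomorphism. -/
noncomputable def thetaHomeo (β : ℕ → ℝ) : (ℕ → ℤ) ≃ₜ (ℕ → ℤ) where
  toFun := theta β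
  invFun := theta β
  left_inv := theta_theta β
  right_inv := theta_theta β
  continuous_toFun := theta_continuous β
  continuous_invFun := theta_continuous β

lemma theta_image_greedy (β : ℕ → ℝ) (hβ : ∀ n, 1 < β n) (hx : XBSummable β) :
    theta β '' greedySet β = lazySet β := by
  ext a
  constructor
  · rintro ⟨b, ⟨x, hx01, rfl⟩, rfl⟩
    refine ⟨xB β - x, ⟨by linarith [hx01.2], by linarith [hx01.1]⟩, ?_⟩
    exact (theta_greedy β hβ hx x).symm ▸ rfl
  · rintro ⟨y, hy, rfl⟩
    refine ⟨greedyDigit β (xB β - y), ⟨xB β - y, ⟨by linarith [hy.2], by linarith [hy.1]⟩, rfl⟩, ?_⟩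
    rw [theta_greedy β hβ hx, sub_sub_cancel]

/-- `θ_β` restricts to bijections `D_β → D'_β` and `S_β → S'_β`. -/
theorem theta_bijOn (β : ℕ → ℝ) (hβ : IsCantorBase β) (hx : XBSummable β) :
    Set.BijOn (theta β) (greedySet β) (lazySet β) ∧
    Set.BijOn (theta β) (closure (greedySet β)) (closure (lazySet β)) := by
  have h1 : theta β '' greedySet β = lazySet β := theta_image_greedy β hβ.one_lt hx
  have h2 : theta β '' closure (greedySet β) = closure (lazySet β) := by
    have := (thetaHomeo β).image_closure (greedySet β)
    rw [← h1]
    exact this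
  constructor
  · have h := ((theta_injective β).injOn).bijOn_image (s := greedySet β)
    rwa [h1] at h
  · have h := ((theta_injective β).injOn).bijOn_image (s := closure (greedySet β))
    rwa [h2] at h
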